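/- Let X ~ Binomial(n, p) and define Ĥ(θ) = F_B(m_u - 1, m, F_B(nθ⁻, n, X/n)) - F_B(m_l - 1, m, F_B(nθ, n, X/n)) as a function of p through the distribution of X. Then the coverage probability Cover(p) = E[Ĥ] of the parametric bootstrap interval for p satisfies lim_{p→0⁺} Cover(p) = 0 and lim_{p→1⁻} Cover(p) = 0, hence inf_{p∈(0,1)} Cover(p) = 0. -/

import Mathlib

/-- The Binomial(n, p) probability mass at `k`. -/
noncomputable def binomPMF (n k : ℕ) (p : ℝ) : ℝ := (n.choose k : ℝ) * p ^ k * (1 - p) ^ (n - k)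

/-- The CDF of the Binomial(m, p) distribution at the integer `j`. -/
noncomputable def binomCDF (j m : ℕ) (p : ℝ) : ℝ := ∑ k ∈ Finset.range (j + 1), binomPMF m k p

/-- The Binomial(n, p) CDF at a real threshold `t`: `P(X ≤ t)`. -/
noncomputable def binomCDFle (t : ℝ) (n : ℕ) (p : ℝ) : ℝ :=
  ∑ k ∈ Finset.range (n + 1), if (k : ℝ) ≤ t then binomPMF n k p else 0

/-- The left limit of the Binomial(n, p) CDF at a real threshold `t`: `P(X < t)`. -/
noncomputable def binomCDFlt (t : ℝ) (n : ℕ) (p : ℝ) : ℝ :=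
  ∑ k ∈ Finset.range (n + 1), if (k : ℝ) < t then binomPMF n k p else 0

/-- The coverage probability of the parametric bootstrap interval for a binomial
proportion `p`:
`Cover(p) = ∑_{x=0}^n [F_B(m_u-1, m, F_B(np⁻, n, x/n)) - F_B(m_l-1, m, F_B(np, n, x/n))]
  p_B(x, n, p)`. -/
noncomputable def Cover (n m m_l m_u : ℕ) (p : ℝ) : ℝ :=
  ∑ x ∈ Finset.range (n + 1),
    (binomCDF (m_u - 1) m (binomCDFlt (n * p) n ((x : ℝ) / n)) -
      binomCDF (m_l - 1) m (binomCDFle (n * p) n ((x : ℝ) / n))) * binomPMF n x p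

noncomputable def gD (m k : ℕ) (q : ℝ) : ℝ :=
  (m : ℝ) * ((m - 1).choose k : ℝ) * q ^ k * (1 - q) ^ (m - 1 - k)

lemma hasDerivAt_one_sub_pow (r : ℕ) (q : ℝ) :
    HasDerivAt (fun q : ℝ => (1 - q) ^ (r + 1)) (-((r + 1) * (1 - q) ^ r)) q := by
  have h := (hasDerivAt_pow (r + 1) (1 - q)).comp q
    ((hasDerivAt_const q (1:ℝ)).sub (hasDerivAt_id q))
  exact h.congr_deriv (by push_cast; ring)

lemma hasDerivAt_binomPMF_succ (m k : ℕ) (hk : k + 1 < m) (q : ℝ) :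
    HasDerivAt (fun q => binomPMF m (k + 1) q) (gD m k q - gD m (k + 1) q) q := by
  obtain ⟨r, hr⟩ : ∃ r, m - (k + 1) = r + 1 := ⟨m - k - 2, by omega⟩
  have h1 : HasDerivAt (fun q : ℝ => q ^ (k + 1)) ((k + 1) * q ^ k) q := by
    simpa using hasDerivAt_pow (k + 1) q
  have h2 := hasDerivAt_one_sub_pow r q
  have h3 := (h1.mul h2).const_mul ((m.choose (k + 1) : ℝ))
  have heq : (fun q : ℝ => binomPMF m (k + 1) q)
      = fun q : ℝ => (m.choose (k + 1) : ℝ) * (q ^ (k + 1) * (1 - q) ^ (r + 1)) := by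
    funext q; rw [binomPMF, hr]; ring
  rw [heq]
  refine h3.congr_deriv ?_
  -- identities
  have id1 : (k + 1) * m.choose (k + 1) = m * (m - 1).choose k := by
    have h5 := Nat.add_one_mul_choose_eq (m - 1) k
    rw [show m - 1 + 1 = m by omega] at h5
    rw [h5, Nat.mul_comm]
  have id2 : (r + 1) * m.choose (k + 1) = m * (m - 1).choose (k + 1) := by
    have h4 := Nat.choose_succ_right_eq m (k + 1)
    have h5 := Nat.add_one_mul_choose_eq (m - 1) (k + 1)
    rw [show m - 1 + 1 = m by omega] at h5
    rw [h5, h4, hr, Nat.mul_comm]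
  have e1 : m - 1 - k = r + 1 := by omega
  have e2 : m - 1 - (k + 1) = r := by omega
  have c1 : ((k:ℝ) + 1) * (m.choose (k + 1) : ℝ) = (m : ℝ) * ((m - 1).choose k : ℝ) := by
    exact_mod_cast congrArg (Nat.cast : ℕ → ℝ) id1
  have c2 : ((r:ℝ) + 1) * (m.choose (k + 1) : ℝ) = (m : ℝ) * ((m - 1).choose (k + 1) : ℝ) := by
    exact_mod_cast congrArg (Nat.cast : ℕ → ℝ) id2
  rw [gD, gD, e1, e2]
  linear_combination (q ^ k * (1 - q) ^ (r + 1)) * c1 - (q ^ (k + 1) * (1 - q) ^ r) * c2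


lemma hasDerivAt_binomCDF (m j : ℕ) (hj : j < m) (q : ℝ) :
    HasDerivAt (fun q => binomCDF j m q) (-(gD m j q)) q := by
  induction j with
  | zero =>
      have heq : (fun q : ℝ => binomCDF 0 m q) = fun q : ℝ => (1 - q) ^ m := by
        funext q; simp [binomCDF, binomPMF]
      obtain ⟨s, hs⟩ : ∃ s, m = s + 1 := ⟨m - 1, by omega⟩
      rw [heq, hs]
      refine (hasDerivAt_one_sub_pow s q).congr_deriv ?_
      rw [gD]
      have : s + 1 - 1 - 0 = s := by omega
      rw [this]
      simp [hs]
  | succ k ih =>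
      have heq : (fun q : ℝ => binomCDF (k + 1) m q)
          = fun q : ℝ => binomCDF k m q + binomPMF m (k + 1) q := by
        funext q; rw [binomCDF, binomCDF, Finset.sum_range_succ]
      rw [heq]
      have h := (ih (by omega)).add (hasDerivAt_binomPMF_succ m k hj q)
      exact h.congr_deriv (by ring)

lemma binomPMF_nonneg (n k : ℕ) {p : ℝ} (h0 : 0 ≤ p) (h1 : p ≤ 1) : 0 ≤ binomPMF n k p := by
  have : (0:ℝ) ≤ 1 - p := by linarith
  rw [binomPMF]; positivity

lemma binomCDF_antitoneOn (m j : ℕ) (hj : j < m) :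
    AntitoneOn (fun q => binomCDF j m q) (Set.Icc (0:ℝ) 1) := by
  have hcont : Continuous fun q : ℝ => binomCDF j m q := by
    unfold binomCDF binomPMF
    exact continuous_finset_sum _ fun k _ => by fun_prop
  have hderiv : ∀ q : ℝ, deriv (fun q => binomCDF j m q) q = -(gD m j q) :=
    fun q => (hasDerivAt_binomCDF m j hj q).deriv
  refine antitoneOn_of_deriv_nonpos (convex_Icc 0 1) hcont.continuousOn
    (fun q _ => (hasDerivAt_binomCDF m j hj q).differentiableAt.differentiableWithinAt) ?_
  intro q hq
  rw [interior_Icc] at hq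
  rw [hderiv]
  have h0 : (0:ℝ) ≤ q := le_of_lt hq.1
  have h1 : (0:ℝ) ≤ 1 - q := by linarith [hq.2]
  rw [gD]
  have : (0:ℝ) ≤ (m : ℝ) * ((m - 1).choose j : ℝ) * q ^ j * (1 - q) ^ (m - 1 - j) := by positivity
  linarith

open Finset Filter Set

lemma sum_binomPMF (n : ℕ) (p : ℝ) : ∑ k ∈ range (n + 1), binomPMF n k p = 1 := by
  have h := add_pow p (1 - p) n
  simp only [add_sub_cancel, one_pow] at h
  rw [show (1:ℝ) = (p + (1 - p)) ^ n by rw [add_sub_cancel, one_pow], add_pow]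
  exact Finset.sum_congr rfl fun k _ => by rw [binomPMF]; ring

lemma binomCDFle_le_one (t : ℝ) (n : ℕ) {q : ℝ} (h0 : 0 ≤ q) (h1 : q ≤ 1) :
    binomCDFle t n q ≤ 1 := by
  rw [binomCDFle, ← sum_binomPMF n q]
  refine Finset.sum_le_sum fun k _ => ?_
  split
  · exact le_refl _
  · exact binomPMF_nonneg n k h0 h1

lemma binomCDFlt_nonneg (t : ℝ) (n : ℕ) {q : ℝ} (h0 : 0 ≤ q) (h1 : q ≤ 1) :
    0 ≤ binomCDFlt t n q := by
  rw [binomCDFlt]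
  refine Finset.sum_nonneg fun k _ => ?_
  split
  · exact binomPMF_nonneg n k h0 h1
  · exact le_refl _

lemma binomCDFlt_le_binomCDFle (t : ℝ) (n : ℕ) {q : ℝ} (h0 : 0 ≤ q) (h1 : q ≤ 1) :
    binomCDFlt t n q ≤ binomCDFle t n q := by
  rw [binomCDFlt, binomCDFle]
  refine Finset.sum_le_sum fun k _ => ?_
  by_cases h : (k : ℝ) < t
  · rw [if_pos h, if_pos h.le]
  · rw [if_neg h]
    split
    · exact binomPMF_nonneg n k h0 h1
    · exact le_refl _

lemma binomCDF_mono_j {j j' : ℕ} (m : ℕ) (hjj : j ≤ j') {q : ℝ} (h0 : 0 ≤ q) (h1 : q ≤ 1) :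
    binomCDF j m q ≤ binomCDF j' m q := by
  rw [binomCDF, binomCDF]
  exact Finset.sum_le_sum_of_subset_of_nonneg
    (Finset.range_subset_range.2 (by omega)) (fun k _ _ => binomPMF_nonneg m k h0 h1)

lemma binomCDF_one (j m : ℕ) (hj : j < m) : binomCDF j m 1 = 0 := by
  rw [binomCDF]
  refine Finset.sum_eq_zero fun k hk => ?_
  rw [binomPMF, sub_self, zero_pow (by simp at hk; omega), mul_zero]

lemma binomCDF_zero (j m : ℕ) : binomCDF j m 0 = 1 := by
  rw [binomCDF]
  rw [Finset.sum_eq_single_of_mem 0 (Finset.mem_range.2 (by omega))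
    (fun k _ hk => by rw [binomPMF, zero_pow hk]; ring)]
  simp [binomPMF]

lemma Cover_nonneg (n m m_l m_u : ℕ) (hn : 1 ≤ n) (h1 : 1 ≤ m_l) (h2 : m_l < m_u) (h3 : m_u ≤ m)
    {p : ℝ} (hp0 : 0 ≤ p) (hp1 : p ≤ 1) : 0 ≤ Cover n m m_l m_u p := by
  rw [Cover]
  refine Finset.sum_nonneg fun x hx => ?_
  have hxn : (x : ℝ) / n ∈ Set.Icc (0:ℝ) 1 := by
    have hn' : (0:ℝ) < n := by exact_mod_cast hn
    have hxle : (x:ℝ) ≤ n := by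
      have : x ≤ n := by simp at hx; omega
      exact_mod_cast this
    constructor
    · positivity
    · rw [div_le_one hn']; exact hxle
  have hq1 : binomCDFlt (n * p) n ((x : ℝ) / n) ∈ Set.Icc (0:ℝ) 1 := by
    constructor
    · exact binomCDFlt_nonneg _ _ hxn.1 hxn.2
    · exact le_trans (binomCDFlt_le_binomCDFle _ _ hxn.1 hxn.2)
        (binomCDFle_le_one _ _ hxn.1 hxn.2)
  have hq2 : binomCDFle (n * p) n ((x : ℝ) / n) ∈ Set.Icc (0:ℝ) 1 := by
    constructor
    · refine le_trans (binomCDFlt_nonneg (n*p) n hxn.1 hxn.2) ?_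
      exact binomCDFlt_le_binomCDFle _ _ hxn.1 hxn.2
    · exact binomCDFle_le_one _ _ hxn.1 hxn.2
  have hmu : m_u - 1 < m := by omega
  have key : binomCDF (m_l - 1) m (binomCDFle (n * p) n ((x : ℝ) / n))
      ≤ binomCDF (m_u - 1) m (binomCDFlt (n * p) n ((x : ℝ) / n)) := by
    calc binomCDF (m_l - 1) m (binomCDFle (n * p) n ((x : ℝ) / n))
        ≤ binomCDF (m_u - 1) m (binomCDFle (n * p) n ((x : ℝ) / n)) :=
          binomCDF_mono_j m (by omega) hq2.1 hq2.2
      _ ≤ binomCDF (m_u - 1) m (binomCDFlt (n * p) n ((x : ℝ) / n)) :=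
          binomCDF_antitoneOn m (m_u - 1) hmu hq1 hq2
            (binomCDFlt_le_binomCDFle _ _ hxn.1 hxn.2)
  exact mul_nonneg (by linarith) (binomPMF_nonneg n x hp0 hp1)

lemma binomCDFlt_small (n : ℕ) {t : ℝ} (q : ℝ) (h0 : 0 < t) (h1 : t < 1) :
    binomCDFlt t n q = binomPMF n 0 q := by
  rw [binomCDFlt]
  rw [Finset.sum_eq_single_of_mem 0 (Finset.mem_range.2 (by omega))
    (fun k _ hk => by
      rw [if_neg]
      push_neg
      calc t ≤ 1 := h1.le
        _ ≤ (k:ℝ) := by exact_mod_cast Nat.one_le_iff_ne_zero.2 hk)]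
  rw [if_pos (by exact_mod_cast h0)]

lemma binomCDFle_small (n : ℕ) {t : ℝ} (q : ℝ) (h0 : 0 ≤ t) (h1 : t < 1) :
    binomCDFle t n q = binomPMF n 0 q := by
  rw [binomCDFle]
  rw [Finset.sum_eq_single_of_mem 0 (Finset.mem_range.2 (by omega))
    (fun k _ hk => by
      rw [if_neg]
      push_neg
      calc t < 1 := h1
        _ ≤ (k:ℝ) := by exact_mod_cast Nat.one_le_iff_ne_zero.2 hk)]
  rw [if_pos (by exact_mod_cast h0)]

lemma binomCDFlt_large (n : ℕ) (hn : 1 ≤ n) {t : ℝ} (q : ℝ) (h0 : (n:ℝ) - 1 < t)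
    (h1 : t < n) : binomCDFlt t n q = binomCDF (n - 1) n q := by
  rw [binomCDFlt, binomCDF, show n - 1 + 1 = n by omega, Finset.sum_range_succ,
    if_neg (by push_neg; exact h1.le)]
  rw [add_zero]
  refine Finset.sum_congr rfl fun k hk => ?_
  rw [if_pos]
  have : (k:ℝ) ≤ (n:ℝ) - 1 := by
    have : k ≤ n - 1 := by simp at hk; omega
    have := (Nat.cast_le (α := ℝ)).2 this
    push_cast [Nat.cast_sub hn] at this ⊢
    linarith
  linarith

lemma binomCDFle_large (n : ℕ) (hn : 1 ≤ n) {t : ℝ} (q : ℝ) (h0 : (n:ℝ) - 1 < t)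
    (h1 : t < n) : binomCDFle t n q = binomCDF (n - 1) n q := by
  rw [binomCDFle, binomCDF, show n - 1 + 1 = n by omega, Finset.sum_range_succ,
    if_neg (by push_neg; exact h1)]
  rw [add_zero]
  refine Finset.sum_congr rfl fun k hk => ?_
  rw [if_pos]
  have : (k:ℝ) ≤ (n:ℝ) - 1 := by
    have : k ≤ n - 1 := by simp at hk; omega
    have := (Nat.cast_le (α := ℝ)).2 this
    push_cast [Nat.cast_sub hn] at this ⊢
    linarith
  linarith

lemma binomPMF_at_zero (n x : ℕ) : binomPMF n x 0 = if x = 0 then 1 else 0 := by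
  rw [binomPMF]
  split
  · subst ‹x = 0›; simp
  · rw [zero_pow ‹x ≠ 0›]; ring

lemma binomPMF_at_one (n x : ℕ) (hx : x ≤ n) : binomPMF n x 1 = if x = n then 1 else 0 := by
  rw [binomPMF, sub_self]
  split
  · subst ‹x = n›; simp
  · rw [zero_pow (by omega)]; ring

/-- The coverage probability tends to `0` as `p → 0⁺` and as `p → 1⁻`, and hence its
infimum over `p ∈ (0,1)` is `0`. -/
theorem stmt13 (n m m_l m_u : ℕ) (hn : 1 ≤ n) (h1 : 1 ≤ m_l) (h2 : m_l < m_u) (h3 : m_u ≤ m) :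
    Filter.Tendsto (Cover n m m_l m_u) (nhdsWithin 0 (Set.Ioi 0)) (nhds 0) ∧
    Filter.Tendsto (Cover n m m_l m_u) (nhdsWithin 1 (Set.Iio 1)) (nhds 0) ∧
    sInf (Cover n m m_l m_u '' Set.Ioo 0 1) = 0 := by
  have hnpos : (0:ℝ) < n := by exact_mod_cast hn
  have hmu1 : m_u - 1 < m := by omega
  have hml1 : m_l - 1 < m := by omega
  -- the polynomial agreeing with Cover near 0
  set G : ℝ → ℝ := fun p => ∑ x ∈ range (n + 1),
    (binomCDF (m_u - 1) m (binomPMF n 0 ((x : ℝ) / n)) -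
      binomCDF (m_l - 1) m (binomPMF n 0 ((x : ℝ) / n))) * binomPMF n x p with hGdef
  have hGcont : Continuous G := by
    refine continuous_finset_sum _ fun x _ => ?_
    unfold binomPMF
    fun_prop
  have hG0 : G 0 = 0 := by
    rw [hGdef]
    simp only
    rw [Finset.sum_eq_single_of_mem 0 (Finset.mem_range.2 (by omega))
      (fun x _ hx => by rw [binomPMF_at_zero, if_neg hx, mul_zero])]
    rw [binomPMF_at_zero, if_pos rfl, mul_one]
    have h00 : ((0:ℕ):ℝ) / n = 0 := by simp
    rw [h00]
    have hpmf0 : binomPMF n 0 (0:ℝ) = 1 := by rw [binomPMF_at_zero, if_pos rfl]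
    rw [hpmf0, binomCDF_one _ _ hmu1, binomCDF_one _ _ hml1, sub_self]
  have hEq0 : Cover n m m_l m_u =ᶠ[nhdsWithin 0 (Set.Ioi 0)] G := by
    filter_upwards [Ioo_mem_nhdsGT_of_mem (Set.left_mem_Ico.2 (one_div_pos.2 hnpos))]
      with p hp
    have ht0 : 0 < (n:ℝ) * p := mul_pos hnpos hp.1
    have ht1 : (n:ℝ) * p < 1 := by
      have := mul_lt_mul_of_pos_left hp.2 hnpos
      rwa [mul_one_div_cancel hnpos.ne'] at this
    rw [Cover, hGdef]
    exact Finset.sum_congr rfl fun x _ => by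
      rw [binomCDFlt_small n _ ht0 ht1, binomCDFle_small n _ ht0.le ht1]
  have htend0 : Filter.Tendsto (Cover n m m_l m_u) (nhdsWithin 0 (Set.Ioi 0)) (nhds 0) := by
    have h : Filter.Tendsto G (nhdsWithin (0:ℝ) (Set.Ioi 0)) (nhds (G 0)) :=
      (hGcont.tendsto 0).mono_left nhdsWithin_le_nhds
    rw [hG0] at h
    exact Filter.Tendsto.congr' hEq0.symm h
  -- the polynomial agreeing with Cover near 1
  set H : ℝ → ℝ := fun p => ∑ x ∈ range (n + 1),
    (binomCDF (m_u - 1) m (binomCDF (n - 1) n ((x : ℝ) / n)) -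
      binomCDF (m_l - 1) m (binomCDF (n - 1) n ((x : ℝ) / n))) * binomPMF n x p with hHdef
  have hHcont : Continuous H := by
    refine continuous_finset_sum _ fun x _ => ?_
    unfold binomPMF
    fun_prop
  have hH1 : H 1 = 0 := by
    rw [hHdef]
    simp only
    rw [Finset.sum_eq_single_of_mem n (Finset.mem_range.2 (by omega))
      (fun x hx hx' => by
        rw [binomPMF_at_one n x (by simp at hx; omega), if_neg hx', mul_zero])]
    rw [binomPMF_at_one n n le_rfl, if_pos rfl, mul_one]
    have hnn : ((n:ℕ):ℝ) / n = 1 := div_self hnpos.ne'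
    rw [hnn, binomCDF_one _ _ (by omega : n - 1 < n), binomCDF_zero, binomCDF_zero, sub_self]
  have hEq1 : Cover n m m_l m_u =ᶠ[nhdsWithin 1 (Set.Iio 1)] H := by
    filter_upwards [Ioo_mem_nhdsLT_of_mem
      (Set.right_mem_Ioc.2 (by
        have : (0:ℝ) < 1/n := by positivity
        linarith : (1:ℝ) - 1/n < 1))]
      with p hp
    have ht0 : (n:ℝ) - 1 < n * p := by
      have := mul_lt_mul_of_pos_left hp.1 hnpos
      rw [mul_sub, mul_one, mul_one_div_cancel hnpos.ne'] at this
      linarith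
    have ht1 : (n:ℝ) * p < n := by
      have := mul_lt_mul_of_pos_left hp.2 hnpos
      rwa [mul_one] at this
    rw [Cover, hHdef]
    exact Finset.sum_congr rfl fun x _ => by
      rw [binomCDFlt_large n hn _ ht0 ht1, binomCDFle_large n hn _ ht0 ht1]
  have htend1 : Filter.Tendsto (Cover n m m_l m_u) (nhdsWithin 1 (Set.Iio 1)) (nhds 0) := by
    have h : Filter.Tendsto H (nhdsWithin (1:ℝ) (Set.Iio 1)) (nhds (H 1)) :=
      (hHcont.tendsto 1).mono_left nhdsWithin_le_nhds
    rw [hH1] at h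
    exact Filter.Tendsto.congr' hEq1.symm h
  refine ⟨htend0, htend1, ?_⟩
  -- the infimum
  have hne : (Cover n m m_l m_u '' Set.Ioo 0 1).Nonempty :=
    ⟨_, Set.mem_image_of_mem _ (by norm_num : (1/2 : ℝ) ∈ Set.Ioo (0:ℝ) 1)⟩
  have hbdd : ∀ y ∈ Cover n m m_l m_u '' Set.Ioo 0 1, 0 ≤ y := by
    rintro y ⟨p, hp, rfl⟩
    exact Cover_nonneg n m m_l m_u hn h1 h2 h3 hp.1.le hp.2.le
  refine le_antisymm ?_ (le_csInf hne hbdd)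
  by_contra hlt
  push_neg at hlt
  have hev : ∀ᶠ p in nhdsWithin 0 (Set.Ioi 0),
      Cover n m m_l m_u p < sInf (Cover n m m_l m_u '' Set.Ioo 0 1) :=
    htend0.eventually_lt_const hlt
  have hev2 : ∀ᶠ p in nhdsWithin (0:ℝ) (Set.Ioi 0), p < 1 :=
    Filter.Eventually.filter_mono nhdsWithin_le_nhds (eventually_lt_nhds (by norm_num : (0:ℝ) < 1))
  have hev3 : ∀ᶠ p in nhdsWithin (0:ℝ) (Set.Ioi 0), p ∈ Set.Ioi (0:ℝ) :=
    eventually_mem_nhdsWithin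
  obtain ⟨p, hplt, hp1, hp0⟩ := (hev.and (hev2.and hev3)).exists
  have : sInf (Cover n m m_l m_u '' Set.Ioo 0 1) ≤ Cover n m m_l m_u p :=
    csInf_le ⟨0, fun y hy => hbdd y hy⟩ (Set.mem_image_of_mem _ ⟨hp0, hp1⟩)
  linarith
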